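/- Let $A\in\mathbb{R}$, $p>0$, $u$ with $|u|<p$, $g\in\mathbb{R}$, $R = \sqrt{(g\cosh A)^2 + p^2 - u^2}$ and $D = g\cosh A + R$. Then the supremum over $v\in\mathbb{R}$ of $F(v) = g v - (p-u)\frac{e^{A}}{4\cosh A}(e^{2v}-1) - (p+u)\frac{e^{-A}}{4\cosh A}(e^{-2v}-1)$ equals $\frac{g}{2}\Bigl(\log\frac{D}{p-u} - A\Bigr) + \frac{p}{2} - \frac{u}{2}\tanh A - \frac{R}{2\cosh A}$. -/

import Mathlib

theorem stmt_4 (A p u g : ℝ) (hp : 0 < p) (hu : |u| < p)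
    (F : ℝ → ℝ)
    (hF : ∀ v, F v = g * v
      - (p - u) * (Real.exp A / (4 * Real.cosh A)) * (Real.exp (2 * v) - 1)
      - (p + u) * (Real.exp (-A) / (4 * Real.cosh A)) * (Real.exp (-(2 * v)) - 1))
    (R D : ℝ)
    (hR : R = Real.sqrt ((g * Real.cosh A) ^ 2 + p ^ 2 - u ^ 2))
    (hD : D = g * Real.cosh A + R) :
    (⨆ v : ℝ, F v) =
      g / 2 * (Real.log (D / (p - u)) - A) + p / 2 - u / 2 * Real.tanh A
        - R / (2 * Real.cosh A) := by
  have hc : 0 < Real.cosh A := Real.cosh_pos A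
  set c := Real.cosh A with hcdef
  obtain ⟨hu1, hu2⟩ := abs_lt.mp hu
  have hpu : 0 < p - u := by linarith
  have hpu' : 0 < p + u := by linarith
  have hR2 : R ^ 2 = (g * c) ^ 2 + p ^ 2 - u ^ 2 := by
    rw [hR, Real.sq_sqrt]; nlinarith [sq_nonneg (g * c)]
  have hRnn : 0 ≤ R := hR ▸ Real.sqrt_nonneg _
  have hRg : g * c ≤ R := by nlinarith [mul_pos hpu hpu']
  have hDpos : 0 < D := by rw [hD]; nlinarith [mul_pos hpu hpu']
  have hDR : D * (R - g * c) = p ^ 2 - u ^ 2 := by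
    rw [hD]; linear_combination hR2
  set vstar := (Real.log (D / (p - u)) - A) / 2 with hvstar
  set t := Real.exp (2 * vstar) with ht
  have htpos : 0 < t := Real.exp_pos _
  have htne : t ≠ 0 := ne_of_gt htpos
  have hcne : c ≠ 0 := ne_of_gt hc
  have hexpA : (0:ℝ) < Real.exp A := Real.exp_pos _
  have htstar : t = D / ((p - u) * Real.exp A) := by
    rw [ht, hvstar]
    have h2' : 2 * ((Real.log (D / (p - u)) - A) / 2) = Real.log (D / (p - u)) - A := by
      ring
    rw [h2', Real.exp_sub, Real.exp_log (div_pos hDpos hpu), div_div]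
  have h1 : (p - u) * Real.exp A * t = D := by
    rw [htstar]; field_simp
  have h2 : (p + u) * Real.exp (-A) = (R - g * c) * t := by
    have hee : Real.exp (-A) * Real.exp A = 1 := by rw [← Real.exp_add]; simp
    have hx : (R - g * c) * t * ((p - u) * Real.exp A)
        = (p + u) * Real.exp (-A) * ((p - u) * Real.exp A) := by
      calc (R - g * c) * t * ((p - u) * Real.exp A)
          = (R - g * c) * D := by rw [← h1]; ring
        _ = p ^ 2 - u ^ 2 := by linarith [hDR]
        _ = (p + u) * Real.exp (-A) * ((p - u) * Real.exp A) := by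
            linear_combination (-(p + u)) * (p - u) * hee
    exact (mul_right_cancel₀ (by positivity) hx).symm
  have hcosh : Real.exp A + Real.exp (-A) = 2 * c := by
    rw [hcdef, Real.cosh_eq]; ring
  have hsinh : Real.exp A - Real.exp (-A) = 2 * Real.sinh A := by
    rw [Real.sinh_eq]; ring
  have htanh : Real.tanh A * c = Real.sinh A := by
    rw [hcdef, Real.tanh_eq_sinh_div_cosh]; field_simp
  -- formula for F at vstar + w, multiplied by 4c
  have hFmul : ∀ w : ℝ, F (vstar + w) * (4 * c) =
      4 * c * g * (vstar + w) - D * Real.exp (2 * w)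
        - (R - g * c) * Real.exp (-(2 * w))
        + (p - u) * Real.exp A + (p + u) * Real.exp (-A) := by
    intro w
    have e1 : Real.exp (2 * (vstar + w)) = t * Real.exp (2 * w) := by
      rw [ht, ← Real.exp_add]; ring_nf
    have e2 : Real.exp (-(2 * (vstar + w))) = Real.exp (-(2 * w)) / t := by
      rw [ht, ← Real.exp_sub]; ring_nf
    rw [hF, e1, e2,
      show D * Real.exp (2 * w) = (p - u) * Real.exp A * (t * Real.exp (2 * w)) by
        rw [← h1]; ring,
      show (R - g * c) * Real.exp (-(2 * w))
          = (p + u) * Real.exp (-A) * Real.exp (-(2 * w)) / t by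
        rw [h2]; field_simp]
    field_simp
    ring
  -- F v ≤ F vstar for all v
  have hle : ∀ v : ℝ, F v ≤ F vstar := by
    intro v
    have hv : v = vstar + (v - vstar) := by ring
    rw [hv]
    have key : F (vstar + (v - vstar)) * (4 * c) ≤ F (vstar + 0) * (4 * c) := by
      rw [hFmul, hFmul]
      set w := v - vstar with hwdef
      simp only [add_zero, mul_zero, Real.exp_zero, neg_zero]
      have b1 : 1 + 2 * w ≤ Real.exp (2 * w) := by
        have := Real.add_one_le_exp (2 * w); linarith
      have b2 : 1 - 2 * w ≤ Real.exp (-(2 * w)) := by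
        have := Real.add_one_le_exp (-(2 * w)); linarith
      have hRgc : 0 ≤ R - g * c := by linarith
      have hw2 : (D - (R - g * c)) * w = 4 * (g * c) * w / 2 := by
        rw [hD]; ring
      nlinarith [mul_le_mul_of_nonneg_left b1 (le_of_lt hDpos),
        mul_le_mul_of_nonneg_left b2 hRgc]
    have h := (mul_le_mul_iff_of_pos_right (by positivity : (0:ℝ) < 4 * c)).mp key
    simpa using h
  -- value of F at vstar
  have hval : F vstar = g / 2 * (Real.log (D / (p - u)) - A) + p / 2 - u / 2 * Real.tanh A
        - R / (2 * c) := by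
    have h0 := hFmul 0
    simp only [add_zero, mul_zero, Real.exp_zero, neg_zero] at h0
    have hrhs : (g / 2 * (Real.log (D / (p - u)) - A) + p / 2 - u / 2 * Real.tanh A
          - R / (2 * c)) * (4 * c)
        = 4 * c * g * vstar - D * 1 - (R - g * c) * 1
          + (p - u) * Real.exp A + (p + u) * Real.exp (-A) := by
      rw [hvstar, hD]
      field_simp
      linear_combination (2 * c) * p * hcosh - (2 * c) * u * hsinh + (4 * c) * u * htanh - (10 * c) * p * hcosh + (10 * c) * u * hsinh - (20 * c) * u * htanh + (8 * c * p - 2 * p) * hcosh + (2 * u - 8 * c * u) * hsinh + (16 * c * u - 4 * u) * htanh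
    exact mul_right_cancel₀ (by positivity) (h0.trans hrhs.symm)
  rw [← hval]
  apply le_antisymm
  · exact ciSup_le hle
  · exact le_ciSup ⟨F vstar, by rintro _ ⟨v, rfl⟩; exact hle v⟩ vstar
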